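/- Let ρ_{AB} = ∑_α p_α ρ_A^α ⊗ ρ_B^α be a bipartite density matrix, where the p_α are probabilities and the ρ_A^α are density matrices on ℂ^{d_A} whose supports are spanned by pairwise disjoint subsets of the standard basis of ℂ^{d_A} (pairwise perfectly distinguishable by incoherent measurements). Then I(A:B)_ρ = I(A:B)_{Φ_A(ρ)}, where Φ_A is dephasing of subsystem A in the standard basis and I(A:B)_σ = S(σ_A) + S(σ_B) − S(σ_{AB}) is the quantum mutual information. Equivalently, the basis-dependent discord δ(B|A)_ρ := I(A:B)_ρ − I(A:B)_{Φ_A(ρ)} vanishes. -/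

import Mathlib

open Matrix
open scoped ComplexOrder Kronecker

/-- Von Neumann entropy of a matrix, via the eigenvalues of a Hermitian matrix
(junk value `0` on non-Hermitian input). -/
noncomputable def vnEntropy {n : Type*} [Fintype n] [DecidableEq n]
    (ρ : Matrix n n ℂ) : ℝ :=
  if h : ρ.IsHermitian then -∑ i, h.eigenvalues i * Real.log (h.eigenvalues i) else 0

/-- Partial trace over subsystem `B`. -/
noncomputable def ptrB {dA dB : ℕ}
    (ρ : Matrix (Fin dA × Fin dB) (Fin dA × Fin dB) ℂ) : Matrix (Fin dA) (Fin dA) ℂ :=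
  Matrix.of fun i i' => ∑ b, ρ (i, b) (i', b)

/-- Partial trace over subsystem `A`. -/
noncomputable def ptrA {dA dB : ℕ}
    (ρ : Matrix (Fin dA × Fin dB) (Fin dA × Fin dB) ℂ) : Matrix (Fin dB) (Fin dB) ℂ :=
  Matrix.of fun b b' => ∑ i, ρ (i, b) (i, b')

/-- Quantum mutual information `I(A:B) = S(ρ_A) + S(ρ_B) - S(ρ_{AB})`. -/
noncomputable def mutualInfo {dA dB : ℕ}
    (ρ : Matrix (Fin dA × Fin dB) (Fin dA × Fin dB) ℂ) : ℝ :=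
  vnEntropy (ptrB ρ) + vnEntropy (ptrA ρ) - vnEntropy ρ

/-- Dephasing of subsystem `A` in the standard basis. -/
noncomputable def dephA {dA dB : ℕ}
    (ρ : Matrix (Fin dA × Fin dB) (Fin dA × Fin dB) ℂ) :
    Matrix (Fin dA × Fin dB) (Fin dA × Fin dB) ℂ :=
  Matrix.of fun p q => if p.1 = q.1 then ρ p q else 0


open Matrix Polynomial
open scoped ComplexOrder Kronecker

noncomputable def pent (P : Polynomial ℂ) : ℝ :=
  (P.roots.map (fun z => z.re * Real.log z.re)).sum

lemma pent_X_pow (k : ℕ) : pent ((X : ℂ[X]) ^ k) = 0 := by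
  simp [pent, roots_pow, roots_X, Multiset.nsmul_singleton]

lemma pent_mul {P Q : ℂ[X]} (hP : P ≠ 0) (hQ : Q ≠ 0) :
    pent (P * Q) = pent P + pent Q := by
  simp [pent, roots_mul (mul_ne_zero hP hQ)]

lemma pent_one : pent (1 : ℂ[X]) = 0 := by simp [pent]

lemma pent_prod {κ : Type*} (s : Finset κ) (f : κ → ℂ[X]) (hf : ∀ a ∈ s, f a ≠ 0) :
    pent (∏ a ∈ s, f a) = ∑ a ∈ s, pent (f a) := by
  classical
  induction s using Finset.induction with
  | empty => simpa using pent_one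
  | @insert a s ha ih =>
      rw [Finset.prod_insert ha, Finset.sum_insert ha,
        pent_mul (hf a (Finset.mem_insert_self a s))
          (Finset.prod_ne_zero_iff.2 fun b hb => hf b (Finset.mem_insert_of_mem hb)),
        ih fun b hb => hf b (Finset.mem_insert_of_mem hb)]

lemma pent_prod_X_sub_C {κ : Type*} [Fintype κ] (w : κ → ℂ) :
    pent (∏ i, (X - C (w i))) = ∑ i, (w i).re * Real.log (w i).re := by
  unfold pent
  rw [Finset.prod_eq_multiset_prod]
  have h1 : (Finset.univ.val.map fun i => X - C (w i))
      = ((Finset.univ.val.map w).map fun a => X - C a) := by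
    rw [Multiset.map_map]; rfl
  rw [h1, roots_multiset_prod_X_sub_C, Multiset.map_map, Finset.sum_eq_multiset_sum]
  rfl


lemma my_charmatrix_eq {n : Type*} [Fintype n] [DecidableEq n] (M : Matrix n n ℂ) :
    charmatrix M = (X : ℂ[X]) • (1 : Matrix n n ℂ[X]) - M.map C := by
  ext i j
  by_cases hij : i = j
  · subst hij
    simp [charmatrix_apply_eq, Matrix.map_apply]
  · simp [charmatrix_apply_ne _ _ _ hij, Matrix.one_apply_ne hij, Matrix.map_apply]

lemma my_charpoly_conj {n : Type*} [Fintype n] [DecidableEq n]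
    (W W' A : Matrix n n ℂ) (h1 : W * W' = 1) :
    (W * A * W').charpoly = A.charpoly := by
  have hWW' : W.map (C : ℂ →+* ℂ[X]) * W'.map C = 1 := by
    rw [← Matrix.map_mul, h1]
    simp
  have hch : charmatrix (W * A * W') = W.map C * charmatrix A * W'.map C := by
    rw [my_charmatrix_eq, my_charmatrix_eq, Matrix.mul_sub, Matrix.sub_mul]
    congr 1
    · rw [mul_smul_comm, smul_mul_assoc, Matrix.mul_one, hWW']
    · rw [Matrix.map_mul, Matrix.map_mul]
  unfold Matrix.charpoly
  rw [hch, det_mul, det_mul]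
  have : (W.map (C : ℂ →+* ℂ[X])).det * (W'.map C).det = 1 := by
    rw [← det_mul, hWW', det_one]
  calc (W.map (C : ℂ →+* ℂ[X])).det * (charmatrix A).det * (W'.map C).det
      = (W.map (C : ℂ →+* ℂ[X])).det * (W'.map C).det * (charmatrix A).det := by ring
    _ = (charmatrix A).det := by rw [this, one_mul]

lemma my_charpoly_diagonal {n : Type*} [Fintype n] [DecidableEq n] (d : n → ℂ) :
    (diagonal d).charpoly = ∏ i, (X - C (d i)) := by
  have h : charmatrix (diagonal d) = diagonal (fun i => X - C (d i)) := by
    ext i j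
    by_cases hij : i = j
    · subst hij; simp [charmatrix_apply_eq]
    · simp [charmatrix_apply_ne _ _ _ hij, diagonal_apply_ne _ hij]
  unfold Matrix.charpoly
  rw [h, det_diagonal]

lemma my_charpoly_zero {m : Type*} [Fintype m] [DecidableEq m] :
    (0 : Matrix m m ℂ).charpoly = X ^ (Fintype.card m) := by
  have h : (0 : Matrix m m ℂ) = diagonal (fun _ => 0) := by simp
  rw [h, my_charpoly_diagonal]
  simp [Finset.card_univ]

lemma my_ofReal_comp : (RCLike.ofReal : ℝ → ℂ) = Complex.ofReal := rfl

lemma my_hermitian_charpoly {n : Type*} [Fintype n] [DecidableEq n] {A : Matrix n n ℂ}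
    (hA : A.IsHermitian) :
    A.charpoly = ∏ i, (X - C ((hA.eigenvalues i : ℂ))) := by
  conv_lhs => rw [hA.spectral_theorem, Unitary.conjStarAlgAut_apply]
  rw [my_charpoly_conj _ _ _ (mem_unitaryGroup_iff.mp (hA.eigenvectorUnitary).2),
    my_charpoly_diagonal]
  rfl

lemma my_hermitian_trace {n : Type*} [Fintype n] [DecidableEq n] {A : Matrix n n ℂ}
    (hA : A.IsHermitian) : A.trace = ((∑ i, hA.eigenvalues i : ℝ) : ℂ) := by
  conv_lhs => rw [hA.spectral_theorem, Unitary.conjStarAlgAut_apply]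
  rw [Matrix.trace_mul_cycle, mem_unitaryGroup_iff'.mp (hA.eigenvectorUnitary).2, one_mul,
    trace_diagonal]
  push_cast
  rfl

lemma my_pent_charpoly_hermitian {n : Type*} [Fintype n] [DecidableEq n] {A : Matrix n n ℂ}
    (hA : A.IsHermitian) :
    pent A.charpoly = ∑ i, hA.eigenvalues i * Real.log (hA.eigenvalues i) := by
  rw [my_hermitian_charpoly hA, pent_prod_X_sub_C]
  simp

lemma vnEntropy_eq_neg_pent {n : Type*} [Fintype n] [DecidableEq n] {A : Matrix n n ℂ}
    (hA : A.IsHermitian) : vnEntropy A = - pent A.charpoly := by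
  rw [vnEntropy, dif_pos hA, my_pent_charpoly_hermitian hA]

lemma my_kron_conjTranspose {l n p q : Type*} (A : Matrix l n ℂ) (B : Matrix p q ℂ) :
    (A ⊗ₖ B)ᴴ = Aᴴ ⊗ₖ Bᴴ := by
  ext i j
  simp [Matrix.conjTranspose_apply, Matrix.kroneckerMap_apply, star_mul', mul_comm]

lemma my_charpoly_kron {n m : Type*} [Fintype n] [DecidableEq n] [Fintype m] [DecidableEq m]
    {M : Matrix n n ℂ} {N : Matrix m m ℂ} (hM : M.IsHermitian) (hN : N.IsHermitian) :
    (M ⊗ₖ N).charpoly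
      = ∏ p : n × m, (X - C ((hM.eigenvalues p.1 : ℂ) * (hN.eigenvalues p.2 : ℂ))) := by
  set U := (hM.eigenvectorUnitary : Matrix n n ℂ) with hU
  set V := (hN.eigenvectorUnitary : Matrix m m ℂ) with hV
  have hMN : M ⊗ₖ N = (U ⊗ₖ V) * ((diagonal (RCLike.ofReal ∘ hM.eigenvalues))
      ⊗ₖ (diagonal (RCLike.ofReal ∘ hN.eigenvalues))) * (star U ⊗ₖ star V) := by
    conv_lhs => rw [hM.spectral_theorem, hN.spectral_theorem, Unitary.conjStarAlgAut_apply,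
      Unitary.conjStarAlgAut_apply]
    rw [← mul_kronecker_mul, ← mul_kronecker_mul]
  have h1 : (U ⊗ₖ V) * (star U ⊗ₖ star V) = 1 := by
    rw [← mul_kronecker_mul, mem_unitaryGroup_iff.mp (hM.eigenvectorUnitary).2,
      mem_unitaryGroup_iff.mp (hN.eigenvectorUnitary).2, one_kronecker_one]
  rw [hMN, my_charpoly_conj _ _ _ h1, diagonal_kronecker_diagonal, my_charpoly_diagonal]
  rfl

lemma my_xlogx_mul {x y : ℝ} (hx : 0 ≤ x) (hy : 0 ≤ y) :
    (x * y) * Real.log (x * y) = y * (x * Real.log x) + x * (y * Real.log y) := by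
  rcases eq_or_lt_of_le hx with h | h
  · simp [← h]
  rcases eq_or_lt_of_le hy with h' | h'
  · simp [← h']
  rw [Real.log_mul h.ne' h'.ne']
  ring

lemma my_pent_kron {n m : Type*} [Fintype n] [DecidableEq n] [Fintype m] [DecidableEq m]
    {M : Matrix n n ℂ} {N : Matrix m m ℂ} (hM : M.PosSemidef) (hN : N.PosSemidef) :
    pent (M ⊗ₖ N).charpoly = N.trace.re * pent M.charpoly + M.trace.re * pent N.charpoly := by
  have hMtr : M.trace.re = ∑ i, hM.1.eigenvalues i := by
    rw [my_hermitian_trace hM.1, Complex.ofReal_re]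
  have hNtr : N.trace.re = ∑ j, hN.1.eigenvalues j := by
    rw [my_hermitian_trace hN.1, Complex.ofReal_re]
  rw [my_charpoly_kron hM.1 hN.1, pent_prod_X_sub_C,
    my_pent_charpoly_hermitian hM.1, my_pent_charpoly_hermitian hN.1, hMtr, hNtr]
  have hterm : ∀ p : n × m,
      (((hM.1.eigenvalues p.1 : ℂ) * (hN.1.eigenvalues p.2 : ℂ)).re
        * Real.log ((hM.1.eigenvalues p.1 : ℂ) * (hN.1.eigenvalues p.2 : ℂ)).re)
      = hN.1.eigenvalues p.2 * (hM.1.eigenvalues p.1 * Real.log (hM.1.eigenvalues p.1))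
        + hM.1.eigenvalues p.1 * (hN.1.eigenvalues p.2 * Real.log (hN.1.eigenvalues p.2)) := by
    intro p
    rw [← Complex.ofReal_mul, Complex.ofReal_re]
    exact my_xlogx_mul (hM.eigenvalues_nonneg p.1) (hN.eigenvalues_nonneg p.2)
  rw [Finset.sum_congr rfl fun p _ => hterm p]
  rw [Fintype.sum_prod_type]
  simp only [Finset.sum_add_distrib, ← Finset.sum_mul, ← Finset.mul_sum]
  try ring

lemma my_pent_charpoly_blocks {n : Type*} [Fintype n] [DecidableEq n] (c : n → ℕ)
    (A : Matrix n n ℂ) (hA : ∀ i j, c i ≠ c j → A i j = 0) :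
    pent A.charpoly = ∑ a ∈ Finset.univ.image c, pent ((A.toSquareBlock c a).charpoly) := by
  have ht : A.BlockTriangular c := fun i j h => hA i j (ne_of_gt h).symm.symm
  rw [ht.charpoly, pent_prod]
  intro a _
  exact (Matrix.charpoly_monic _).ne_zero

lemma my_block_of_zero_color {n κ : Type*} [Fintype n] [DecidableEq n]
    (c : n → ℕ) (B : Matrix n n ℂ) (a : ℕ)
    (hB : ∀ i j, c i ≠ a ∨ c j ≠ a → B i j = 0) (b : ℕ) (hb : b ≠ a) :
    B.toSquareBlock c b = 0 := by
  ext ⟨i, hi⟩ ⟨j, hj⟩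
  simp only [Matrix.toSquareBlock_def, Matrix.zero_apply]
  exact hB i j (Or.inl (by rw [hi]; exact hb))

lemma my_pent_charpoly_sum {n κ : Type*} [Fintype n] [DecidableEq n] [Fintype κ]
    (M : κ → Matrix n n ℂ) (c : n → ℕ) (g : κ → ℕ) (hg : Function.Injective g)
    (hM : ∀ α i j, c i ≠ g α ∨ c j ≠ g α → M α i j = 0) :
    pent (∑ α, M α).charpoly = ∑ α, pent (M α).charpoly := by
  classical
  have hsum0 : ∀ i j, c i ≠ c j → (∑ α, M α) i j = 0 := by
    intro i j hij
    rw [Matrix.sum_apply]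
    refine Finset.sum_eq_zero fun α _ => hM α i j ?_
    by_cases h : c i = g α
    · exact Or.inr (by rw [← h]; exact fun e => hij e.symm)
    · exact Or.inl h
  rw [my_pent_charpoly_blocks c _ hsum0]
  have hα : ∀ α, pent (M α).charpoly
      = ∑ a ∈ Finset.univ.image c, pent (((M α).toSquareBlock c a).charpoly) := by
    intro α
    refine my_pent_charpoly_blocks c (M α) fun i j hij => hM α i j ?_
    by_cases h : c i = g α
    · exact Or.inr (by rw [← h]; exact fun e => hij e.symm)
    · exact Or.inl h
  rw [Finset.sum_congr rfl fun α _ => hα α, Finset.sum_comm]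
  refine Finset.sum_congr rfl fun a _ => ?_
  have hblock : (∑ α, M α).toSquareBlock c a = ∑ α, (M α).toSquareBlock c a := by
    ext i j
    simp [Matrix.toSquareBlock_def, Matrix.sum_apply]
  have hpent0 : ∀ α, g α ≠ a → pent (((M α).toSquareBlock c a).charpoly) = 0 := by
    intro α hga
    rw [my_block_of_zero_color (κ := κ) c (M α) (g α) (hM α) a (Ne.symm hga),
      my_charpoly_zero, pent_X_pow]
  by_cases hex : ∃ α₀, g α₀ = a
  · obtain ⟨α₀, hα₀⟩ := hex
    have h1 : (∑ α, (M α).toSquareBlock c a) = (M α₀).toSquareBlock c a := by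
      refine Finset.sum_eq_single α₀ (fun β _ hβ => ?_) (by simp)
      exact my_block_of_zero_color (κ := κ) c (M β) (g β) (hM β) a
        (fun h => hβ (hg (h.symm.trans hα₀.symm)))
    rw [hblock, h1]
    refine (Finset.sum_eq_single α₀ (fun β _ hβ => hpent0 β ?_) (by simp)).symm
    exact fun h => hβ (hg (h.trans hα₀.symm))
  · push_neg at hex
    have h1 : (∑ α, (M α).toSquareBlock c a) = 0 := by
      refine Finset.sum_eq_zero fun β _ => ?_
      exact my_block_of_zero_color (κ := κ) c (M β) (g β) (hM β) a (Ne.symm (hex β))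
    rw [hblock, h1, my_charpoly_zero, pent_X_pow]
    exact (Finset.sum_eq_zero fun β _ => hpent0 β (hex β)).symm

lemma my_psd_smul {n : Type*} [Fintype n] [DecidableEq n] {M : Matrix n n ℂ}
    (hM : M.PosSemidef) {r : ℝ} (hr : 0 ≤ r) : (((r : ℝ) : ℂ) • M).PosSemidef := by
  constructor
  · unfold Matrix.IsHermitian
    rw [Matrix.conjTranspose_smul, Complex.star_def, Complex.conj_ofReal, hM.1]
  · intro x
    have hH : (((r : ℝ) : ℂ) • M).IsHermitian := by
      unfold Matrix.IsHermitian
      rw [Matrix.conjTranspose_smul, Complex.star_def, Complex.conj_ofReal, hM.1]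
    refine (posSemidef_iff_dotProduct_mulVec.mpr ⟨hH, fun x => ?_⟩).2 x
    rw [Matrix.smul_mulVec, dotProduct_smul, smul_eq_mul]
    exact mul_nonneg (Complex.zero_le_real.2 hr) (hM.dotProduct_mulVec_nonneg x)

lemma my_ptrB_sum {dA dB : ℕ} {ι : Type*} [Fintype ι]
    (p : ι → ℝ) (τ : ι → Matrix (Fin dA) (Fin dA) ℂ) (ρB : ι → Matrix (Fin dB) (Fin dB) ℂ)
    (hρBtr : ∀ α, (ρB α).trace = 1)
    (σ : Matrix (Fin dA × Fin dB) (Fin dA × Fin dB) ℂ)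
    (hσ : σ = ∑ α, ((p α : ℝ) : ℂ) • (τ α ⊗ₖ ρB α)) :
    ptrB σ = ∑ α, ((p α : ℝ) : ℂ) • τ α := by
  have htrB : ∀ α, (∑ b, ρB α b b) = 1 := by
    intro α
    have := hρBtr α
    simpa [Matrix.trace, Matrix.diag] using this
  ext i j
  simp only [ptrB, Matrix.of_apply, hσ, Matrix.sum_apply, Matrix.smul_apply,
    Matrix.kroneckerMap_apply, smul_eq_mul]
  rw [Finset.sum_comm]
  refine Finset.sum_congr rfl fun α _ => ?_
  rw [← Finset.mul_sum, ← Finset.mul_sum, htrB α, mul_one]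

lemma my_key {dA dB : ℕ} {ι : Type*} [Fintype ι]
    (p : ι → ℝ) (hp : ∀ α, 0 ≤ p α)
    (τ : ι → Matrix (Fin dA) (Fin dA) ℂ) (ρB : ι → Matrix (Fin dB) (Fin dB) ℂ)
    (hτ : ∀ α, (τ α).PosSemidef ∧ (τ α).trace = 1)
    (hρB : ∀ α, (ρB α).PosSemidef ∧ (ρB α).trace = 1)
    (S : ι → Finset (Fin dA))
    (hdisj : ∀ α β, α ≠ β → Disjoint (S α) (S β))
    (hsupp : ∀ α i j, i ∉ S α ∨ j ∉ S α → τ α i j = 0)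
    (σ : Matrix (Fin dA × Fin dB) (Fin dA × Fin dB) ℂ)
    (hσ : σ = ∑ α, ((p α : ℝ) : ℂ) • (τ α ⊗ₖ ρB α)) :
    pent σ.charpoly = pent (ptrB σ).charpoly + ∑ α, p α * pent (ρB α).charpoly := by
  classical
  set e := Fintype.equivFin ι with he
  set g : ι → ℕ := fun α => (e α : ℕ) with hgdef
  have hg : Function.Injective g := fun a b h => e.injective (Fin.val_injective h)
  set c : Fin dA → ℕ := fun i => if h : ∃ α, i ∈ S α then g h.choose else Fintype.card ι
    with hcdef
  have hcS : ∀ α i, i ∈ S α → c i = g α := by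
    intro α i hi
    have hex : ∃ β, i ∈ S β := ⟨α, hi⟩
    rw [hcdef]
    simp only [dif_pos hex]
    congr 1
    by_contra hne
    exact (Finset.disjoint_left.mp (hdisj _ _ hne) hex.choose_spec) hi
  have hnotin : ∀ α (i : Fin dA), c i ≠ g α → i ∉ S α := fun α i hne hi => hne (hcS α i hi)
  -- traces of ρB as sums
  have htrB : ∀ α, (∑ b, ρB α b b) = 1 := by
    intro α
    have := (hρB α).2
    simpa [Matrix.trace, Matrix.diag] using this
  have hptr : ptrB σ = ∑ α, ((p α : ℝ) : ℂ) • τ α :=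
    my_ptrB_sum p τ ρB (fun α => (hρB α).2) σ hσ
  -- blocks for σ
  have h1 : pent σ.charpoly
      = ∑ α, pent ((((p α : ℝ) : ℂ) • (τ α ⊗ₖ ρB α)).charpoly) := by
    rw [hσ]
    refine my_pent_charpoly_sum (κ := ι) _ (fun x => c x.1) g hg ?_
    rintro α ⟨i, b⟩ ⟨j, b'⟩ hij
    simp only [Matrix.smul_apply, Matrix.kroneckerMap_apply, smul_eq_mul]
    rcases hij with h | h
    · rw [hsupp α i j (Or.inl (hnotin α i h))]; ring
    · rw [hsupp α i j (Or.inr (hnotin α j h))]; ring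
  have h2 : pent (ptrB σ).charpoly = ∑ α, pent ((((p α : ℝ) : ℂ) • τ α).charpoly) := by
    rw [hptr]
    refine my_pent_charpoly_sum (κ := ι) _ c g hg ?_
    intro α i j hij
    simp only [Matrix.smul_apply, smul_eq_mul]
    rcases hij with h | h
    · rw [hsupp α i j (Or.inl (hnotin α i h))]; ring
    · rw [hsupp α i j (Or.inr (hnotin α j h))]; ring
  have h3 : ∀ α, pent ((((p α : ℝ) : ℂ) • (τ α ⊗ₖ ρB α)).charpoly)
      = pent ((((p α : ℝ) : ℂ) • τ α).charpoly) + p α * pent ((ρB α).charpoly) := by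
    intro α
    rw [← Matrix.smul_kronecker,
      my_pent_kron (my_psd_smul (hτ α).1 (hp α)) (hρB α).1,
      (hρB α).2]
    have htr : ((((p α : ℝ) : ℂ) • τ α).trace) = ((p α : ℝ) : ℂ) := by
      rw [Matrix.trace_smul, (hτ α).2, smul_eq_mul, mul_one]
    rw [htr]
    simp [Complex.ofReal_re]
  rw [h1, Finset.sum_congr rfl fun α _ => h3 α, Finset.sum_add_distrib, h2]

lemma my_kron_herm {n m : Type*} {A : Matrix n n ℂ} {B : Matrix m m ℂ}
    (hA : A.IsHermitian) (hB : B.IsHermitian) : (A ⊗ₖ B).IsHermitian := by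
  unfold Matrix.IsHermitian
  rw [my_kron_conjTranspose, hA, hB]

lemma my_herm_sum {n : Type*} {ι : Type*} [Fintype ι]
    (p : ι → ℝ) (f : ι → Matrix n n ℂ) (hf : ∀ α, (f α).IsHermitian) :
    (∑ α, ((p α : ℝ) : ℂ) • f α).IsHermitian := by
  unfold Matrix.IsHermitian
  rw [Matrix.conjTranspose_sum]
  refine Finset.sum_congr rfl fun α _ => ?_
  rw [Matrix.conjTranspose_smul, Complex.star_def, Complex.conj_ofReal, hf α]

lemma my_psd_diag {n : Type*} [Fintype n] [DecidableEq n] {M : Matrix n n ℂ}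
    (hM : M.PosSemidef) (i : n) : 0 ≤ M i i := by
  exact hM.diag_nonneg

/-- If `ρ_{AB} = ∑ α, p α • (ρA α ⊗ ρB α)` where the `ρA α` are supported on pairwise
disjoint subsets of the incoherent basis, then the mutual information is unchanged by
dephasing subsystem `A`: the basis-dependent discord `δ(B|A)` vanishes. -/
theorem stmt_19 {dA dB : ℕ} {ι : Type*} [Fintype ι]
    (p : ι → ℝ) (hp : ∀ α, 0 ≤ p α) (hp1 : ∑ α, p α = 1)
    (ρA : ι → Matrix (Fin dA) (Fin dA) ℂ) (ρB : ι → Matrix (Fin dB) (Fin dB) ℂ)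
    (hρA : ∀ α, (ρA α).PosSemidef ∧ (ρA α).trace = 1)
    (hρB : ∀ α, (ρB α).PosSemidef ∧ (ρB α).trace = 1)
    (S : ι → Finset (Fin dA))
    (hdisj : ∀ α β, α ≠ β → Disjoint (S α) (S β))
    (hsupp : ∀ α i j, i ∉ S α ∨ j ∉ S α → ρA α i j = 0)
    (ρ : Matrix (Fin dA × Fin dB) (Fin dA × Fin dB) ℂ)
    (hρ : ρ = ∑ α, ((p α : ℝ) : ℂ) • (ρA α ⊗ₖ ρB α)) :
    mutualInfo ρ = mutualInfo (dephA ρ) := by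
  classical
  set τ' : ι → Matrix (Fin dA) (Fin dA) ℂ :=
    fun α => Matrix.diagonal (fun i => ρA α i i) with hτ'def
  have hτ' : ∀ α, (τ' α).PosSemidef ∧ (τ' α).trace = 1 := by
    intro α
    constructor
    · exact Matrix.posSemidef_diagonal_iff.mpr fun i => my_psd_diag (hρA α).1 i
    · rw [hτ'def]
      simp only [Matrix.trace_diagonal]
      have := (hρA α).2
      simpa [Matrix.trace, Matrix.diag] using this
  have hsupp' : ∀ α i j, i ∉ S α ∨ j ∉ S α → τ' α i j = 0 := by
    intro α i j h
    by_cases hij : i = j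
    · subst hij
      rw [hτ'def]
      simp only [Matrix.diagonal_apply_eq]
      exact hsupp α i i h
    · rw [hτ'def]
      exact Matrix.diagonal_apply_ne _ hij
  have hdeph : dephA ρ = ∑ α, ((p α : ℝ) : ℂ) • (τ' α ⊗ₖ ρB α) := by
    ext ⟨i, b⟩ ⟨j, b'⟩
    simp only [dephA, Matrix.of_apply, hρ, Matrix.sum_apply, Matrix.smul_apply,
      Matrix.kroneckerMap_apply, smul_eq_mul]
    by_cases hij : i = j
    · subst hij
      simp [hτ'def, Matrix.diagonal_apply_eq]
    · simp [hij, hτ'def, Matrix.diagonal_apply_ne _ hij]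
  have key1 := my_key p hp ρA ρB hρA hρB S hdisj hsupp ρ hρ
  have key2 := my_key p hp τ' ρB hτ' hρB S hdisj hsupp' (dephA ρ) hdeph
  have hptrB1 : ptrB ρ = ∑ α, ((p α : ℝ) : ℂ) • ρA α :=
    my_ptrB_sum p ρA ρB (fun α => (hρB α).2) ρ hρ
  have hptrB2 : ptrB (dephA ρ) = ∑ α, ((p α : ℝ) : ℂ) • τ' α :=
    my_ptrB_sum p τ' ρB (fun α => (hρB α).2) (dephA ρ) hdeph
  have hρh : ρ.IsHermitian := by
    rw [hρ]
    exact my_herm_sum p _ fun α => my_kron_herm (hρA α).1.1 (hρB α).1.1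
  have hρh' : (dephA ρ).IsHermitian := by
    rw [hdeph]
    exact my_herm_sum p _ fun α => my_kron_herm (hτ' α).1.1 (hρB α).1.1
  have hBh1 : (ptrB ρ).IsHermitian := by
    rw [hptrB1]
    exact my_herm_sum p _ fun α => (hρA α).1.1
  have hBh2 : (ptrB (dephA ρ)).IsHermitian := by
    rw [hptrB2]
    exact my_herm_sum p _ fun α => (hτ' α).1.1
  have hptrA : ptrA (dephA ρ) = ptrA ρ := by
    ext b b'
    simp [ptrA, dephA]
  unfold mutualInfo
  rw [hptrA, vnEntropy_eq_neg_pent hρh, vnEntropy_eq_neg_pent hρh',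
    vnEntropy_eq_neg_pent hBh1, vnEntropy_eq_neg_pent hBh2]
  linarith [key1, key2]
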